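/- Exponential decay of distance to a convex set under the fluid dynamics: let X ⊂ ℝ^N be a fixed nonempty closed convex set and suppose x : [0,∞) → ℝ^N is absolutely continuous and satisfies x'(t) = v(t) - x(t) for almost every t, where v(t) ∈ X. Then dist(x(t), X) ≤ dist(x(0), X) · e^{-t} for all t ≥ 0. -/

import Mathlib

open MeasureTheory Set

section Aux

variable {E : Type*} [NormedAddCommGroup E] [NormedSpace ℝ E] [CompleteSpace E]

private lemma smul_integrableOn_Ioc {c : ℝ → ℝ} (hc : Continuous c) {u : ℝ → E} {t : ℝ}
    (hu : IntegrableOn u (Ioc 0 t) volume) :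
    IntegrableOn (fun s => c s • u s) (Ioc 0 t) volume := by
  obtain ⟨M, hM⟩ : ∃ M, ∀ s ∈ Icc (0:ℝ) t, ‖c s‖ ≤ M :=
    isCompact_Icc.exists_bound_of_continuousOn hc.continuousOn
  apply Integrable.mono' (hu.norm.const_mul M)
  · exact hc.aestronglyMeasurable.smul hu.aestronglyMeasurable
  · filter_upwards [ae_restrict_mem measurableSet_Ioc] with s hs
    rw [norm_smul]
    exact mul_le_mul_of_nonneg_right (hM s (Ioc_subset_Icc_self hs)) (norm_nonneg _)

private lemma fubini_triangle {u : ℝ → E} {t : ℝ} (ht : 0 ≤ t)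
    (hu : IntegrableOn u (Ioc 0 t) volume) :
    ∫ s in (0:ℝ)..t, Real.exp s • (∫ r in (0:ℝ)..s, u r) =
      ∫ r in (0:ℝ)..t, (Real.exp t - Real.exp r) • u r := by
  set μ := volume.restrict (Ioc (0:ℝ) t) with hμ
  haveI : IsFiniteMeasure μ :=
    ⟨by rw [Measure.restrict_apply_univ]; exact measure_Ioc_lt_top⟩
  set g : ℝ → ℝ → E := fun s r => Set.indicator (Iic s) (fun r => Real.exp s • u r) r with hg
  have husm : AEStronglyMeasurable u μ := hu.aestronglyMeasurable
  have hgsm : AEStronglyMeasurable (Function.uncurry g) (μ.prod μ) := by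
    have h1 : AEStronglyMeasurable (fun p : ℝ × ℝ => Real.exp p.1 • u p.2) (μ.prod μ) :=
      (Real.continuous_exp.comp continuous_fst).aestronglyMeasurable.smul husm.comp_snd
    have hK : MeasurableSet {p : ℝ × ℝ | p.2 ≤ p.1} :=
      measurableSet_le measurable_snd measurable_fst
    have heq : Function.uncurry g =
        Set.indicator {p : ℝ × ℝ | p.2 ≤ p.1} (fun p => Real.exp p.1 • u p.2) := by
      ext p
      by_cases h : p.2 ≤ p.1 <;>
        simp [Function.uncurry, hg, Set.indicator, h, Set.mem_Iic]
    rw [heq]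
    exact h1.indicator hK
  have hnorm_int : Integrable (fun p : ℝ × ℝ => ‖u p.2‖) (μ.prod μ) := by
    rw [integrable_prod_iff (husm.norm.comp_snd)]
    constructor
    · exact Filter.Eventually.of_forall fun s => hu.norm
    · simpa using integrable_const (μ := μ) (∫ r, ‖u r‖ ∂μ)
  have hae1 : ∀ᵐ p : ℝ × ℝ ∂(μ.prod μ), p.1 ∈ Ioc (0:ℝ) t := by
    rw [hμ, Measure.prod_restrict]
    filter_upwards [ae_restrict_mem (measurableSet_Ioc.prod measurableSet_Ioc)] with p hp
    exact hp.1
  have hgint : Integrable (Function.uncurry g) (μ.prod μ) := by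
    apply Integrable.mono' (hnorm_int.const_mul (Real.exp t)) hgsm
    filter_upwards [hae1] with p hp
    have h1 : ‖Function.uncurry g p‖ ≤ ‖Real.exp p.1 • u p.2‖ := by
      simp only [Function.uncurry, hg]
      exact norm_indicator_le_norm_self _ _
    rw [norm_smul, Real.norm_eq_abs, abs_of_pos (Real.exp_pos _)] at h1
    exact h1.trans (mul_le_mul_of_nonneg_right (Real.exp_le_exp.2 hp.2) (norm_nonneg _))
  have hswap : (∫ s, ∫ r, g s r ∂μ ∂μ) = ∫ r, ∫ s, g s r ∂μ ∂μ :=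
    integral_integral_swap hgint
  have hL : ∀ s ∈ Ioc (0:ℝ) t, (∫ r, g s r ∂μ) = Real.exp s • ∫ r in (0:ℝ)..s, u r := by
    intro s hs
    rw [hg]
    rw [integral_indicator measurableSet_Iic, hμ,
      Measure.restrict_restrict measurableSet_Iic]
    have hset : Iic s ∩ Ioc 0 t = Ioc 0 s := by
      ext r
      constructor
      · rintro ⟨h1, h2, _⟩; exact ⟨h2, h1⟩
      · rintro ⟨h2, h1⟩; exact ⟨h1, h2, h1.trans hs.2⟩
    rw [hset, integral_smul, intervalIntegral.integral_of_le hs.1.le]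
  have hR : ∀ r ∈ Ioc (0:ℝ) t, (∫ s, g s r ∂μ) = (Real.exp t - Real.exp r) • u r := by
    intro r hr
    have heq : (fun s => g s r) = Set.indicator (Ici r) (fun s => Real.exp s • u r) := by
      ext s
      by_cases h : r ≤ s <;>
        simp [hg, Set.indicator, Set.mem_Iic, Set.mem_Ici, h]
    rw [heq, integral_indicator measurableSet_Ici, hμ,
      Measure.restrict_restrict measurableSet_Ici]
    have hset : Ici r ∩ Ioc 0 t = Icc r t := by
      ext s
      constructor
      · rintro ⟨h1, _, h3⟩; exact ⟨h1, h3⟩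
      · rintro ⟨h1, h2⟩; exact ⟨h1, hr.1.trans_le h1, h2⟩
    rw [hset, integral_smul_const]
    congr 1
    rw [MeasureTheory.integral_Icc_eq_integral_Ioc, ← intervalIntegral.integral_of_le hr.2]
    simp [integral_exp]
  calc ∫ s in (0:ℝ)..t, Real.exp s • (∫ r in (0:ℝ)..s, u r)
      = ∫ s, Real.exp s • (∫ r in (0:ℝ)..s, u r) ∂μ := intervalIntegral.integral_of_le ht
    _ = ∫ s, ∫ r, g s r ∂μ ∂μ :=
        setIntegral_congr_fun measurableSet_Ioc fun s hs => (hL s hs).symm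
    _ = ∫ r, ∫ s, g s r ∂μ ∂μ := hswap
    _ = ∫ r, (Real.exp t - Real.exp r) • u r ∂μ :=
        setIntegral_congr_fun measurableSet_Ioc fun r hr => hR r hr
    _ = ∫ r in (0:ℝ)..t, (Real.exp t - Real.exp r) • u r :=
        (intervalIntegral.integral_of_le ht).symm

end Aux

/-- Exponential decay of the distance to a convex set under the fluid dynamics:
if `x` is absolutely continuous (written in integral form
`x(t) = x(0) + ∫₀ᵗ (v(s) - x(s)) ds`, so that `x'(t) = v(t) - x(t)` a.e.)
with `v(t) ∈ X` for a nonempty closed convex set `X`, then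
`dist(x(t), X) ≤ dist(x(0), X) e^{-t}` for all `t ≥ 0`. -/
theorem fluid_dist_exponential_decay
    (N : ℕ) (X : Set (EuclideanSpace ℝ (Fin N)))
    (hXne : X.Nonempty) (hXcl : IsClosed X) (hXconv : Convex ℝ X)
    (x v : ℝ → EuclideanSpace ℝ (Fin N))
    (hv : ∀ t : ℝ, 0 ≤ t → v t ∈ X)
    (hint : ∀ t : ℝ, 0 ≤ t →
      IntervalIntegrable (fun s => v s - x s) MeasureTheory.volume 0 t)
    (hAC : ∀ t : ℝ, 0 ≤ t → x t = x 0 + ∫ s in (0 : ℝ)..t, (v s - x s)) :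
    ∀ t : ℝ, 0 ≤ t →
      Metric.infDist (x t) X ≤ Metric.infDist (x 0) X * Real.exp (-t) := by
  intro t ht
  rcases eq_or_lt_of_le ht with h0 | htpos
  · rw [← h0]
    simp
  set u : ℝ → EuclideanSpace ℝ (Fin N) := fun s => v s - x s with hu_def
  have hu : IntegrableOn u (Ioc 0 t) volume := by
    have h := hint t ht
    rwa [intervalIntegrable_iff, uIoc_of_le ht] at h
  set F : ℝ → EuclideanSpace ℝ (Fin N) := fun s => ∫ r in (0:ℝ)..s, u r with hF_def
  have hFcont : ContinuousOn F (Icc 0 t) := by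
    have h := intervalIntegral.continuousOn_primitive_interval (a := (0:ℝ)) (b := t)
      (f := u) (μ := volume) ?_
    · rwa [uIcc_of_le ht] at h
    · rw [uIcc_of_le ht, integrableOn_Icc_iff_integrableOn_Ioc]
      exact hu
  have hxcont : ContinuousOn x (Icc 0 t) := by
    have h1 : ContinuousOn (fun s => x 0 + F s) (Icc 0 t) := continuousOn_const.add hFcont
    exact h1.congr fun s hs => hAC s hs.1
  have hx_int : IntegrableOn x (Ioc 0 t) volume :=
    (hxcont.integrableOn_Icc).mono_set Ioc_subset_Icc_self
  have hv_int : IntegrableOn v (Ioc 0 t) volume := by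
    have hveq : v = fun s => u s + x s := by
      funext s; simp [hu_def]
    rw [hveq]
    exact hu.add hx_int
  -- interval integrabilities
  have hi1 : IntervalIntegrable (fun s => Real.exp s • u s) volume 0 t := by
    rw [intervalIntegrable_iff, uIoc_of_le ht]
    exact smul_integrableOn_Ioc Real.continuous_exp hu
  have hi2 : IntervalIntegrable (fun s => Real.exp s • x 0) volume 0 t :=
    (Real.continuous_exp.smul continuous_const).intervalIntegrable 0 t
  have hi3 : IntervalIntegrable (fun s => Real.exp s • F s) volume 0 t := by
    apply ContinuousOn.intervalIntegrable
    rw [uIcc_of_le ht]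
    exact Real.continuous_exp.continuousOn.smul hFcont
  have hi4 : IntervalIntegrable (fun s => Real.exp t • u s) volume 0 t := by
    rw [intervalIntegrable_iff, uIoc_of_le ht]
    exact smul_integrableOn_Ioc continuous_const hu
  -- splitting of the main integral
  have hsplit : (∫ s in (0:ℝ)..t, Real.exp s • v s) =
      (∫ s in (0:ℝ)..t, Real.exp s • u s) +
        ((∫ s in (0:ℝ)..t, Real.exp s • x 0) + ∫ s in (0:ℝ)..t, Real.exp s • F s) := by
    rw [← intervalIntegral.integral_add hi2 hi3, ← intervalIntegral.integral_add hi1 (hi2.add hi3)]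
    apply intervalIntegral.integral_congr
    intro s hs
    rw [uIcc_of_le ht] at hs
    have hx : x s = x 0 + F s := hAC s hs.1
    show Real.exp s • v s = Real.exp s • u s + (Real.exp s • x 0 + Real.exp s • F s)
    have hvs : v s = u s + (x 0 + F s) := by
      rw [← hx]
      simp [hu_def]
    rw [hvs]
    simp only [smul_add]
  have hfub : (∫ s in (0:ℝ)..t, Real.exp s • F s) =
      Real.exp t • F t - ∫ s in (0:ℝ)..t, Real.exp s • u s := by
    rw [hF_def]
    rw [fubini_triangle ht hu]
    have hsub : (fun r => (Real.exp t - Real.exp r) • u r) =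
        fun r => Real.exp t • u r - Real.exp r • u r := by
      funext r; rw [sub_smul]
    rw [hsub, intervalIntegral.integral_sub hi4 hi1, intervalIntegral.integral_smul]
  have hx0int : (∫ s in (0:ℝ)..t, Real.exp s • x 0) = (Real.exp t - 1) • x 0 := by
    rw [intervalIntegral.integral_smul_const]
    simp [integral_exp]
  have hstar : Real.exp t • x t = x 0 + ∫ s in (0:ℝ)..t, Real.exp s • v s := by
    rw [hsplit, hfub, hx0int, hAC t ht]
    simp only [smul_add, sub_smul, one_smul]
    abel
  set I : EuclideanSpace ℝ (Fin N) := ∫ s in (0:ℝ)..t, Real.exp s • v s with hI_def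
  set c : ℝ := Real.exp t - 1 with hc_def
  have hc : 0 < c := by
    rw [hc_def]
    have : (1:ℝ) < Real.exp t := Real.one_lt_exp_iff.2 htpos
    linarith
  -- the averaged velocity lies in X
  have hw : c⁻¹ • I ∈ X := by
    set f : ℝ → NNReal := fun s => Real.toNNReal (Real.exp s / c) with hf_def
    have hf : Measurable f :=
      (Real.measurable_exp.div_const c).real_toNNReal
    have hfcoe : ∀ s, ((f s : ℝ)) = Real.exp s / c := fun s =>
      Real.coe_toNNReal _ (by positivity)
    set ρ := (volume.restrict (Ioc (0:ℝ) t)).withDensity (fun s => (f s : ENNReal)) with hρ_def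
    have hsmul_eq : (fun s => f s • v s) = fun s => (Real.exp s / c) • v s := by
      funext s
      rw [NNReal.smul_def, hfcoe]
    have hvint_smul : Integrable (fun s => f s • v s) (volume.restrict (Ioc (0:ℝ) t)) := by
      rw [hsmul_eq]
      exact smul_integrableOn_Ioc (Real.continuous_exp.div_const c) hv_int
    have hρv : Integrable v ρ := (integrable_withDensity_iff_integrable_smul hf).2 hvint_smul
    have hexp_int : (∫ s in Ioc (0:ℝ) t, Real.exp s / c) = 1 := by
      have h1 : (∫ s in Ioc (0:ℝ) t, Real.exp s / c) =
          (∫ s in Ioc (0:ℝ) t, Real.exp s) / c := by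
        rw [integral_div]
      rw [h1, ← intervalIntegral.integral_of_le ht, integral_exp, Real.exp_zero]
      have h2 : Real.exp t - 1 = c := hc_def.symm
      rw [h2]
      exact div_self (ne_of_gt hc)
    haveI hρprob : IsProbabilityMeasure ρ := by
      constructor
      rw [hρ_def, withDensity_apply _ MeasurableSet.univ, Measure.restrict_univ]
      have hcoe : ∀ s, ((f s : ENNReal)) = ENNReal.ofReal (Real.exp s / c) := by
        intro s
        rw [ENNReal.ofReal]
      calc (∫⁻ s, (f s : ENNReal) ∂(volume.restrict (Ioc (0:ℝ) t)))
          = ∫⁻ s, ENNReal.ofReal (Real.exp s / c) ∂(volume.restrict (Ioc (0:ℝ) t)) := by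
            simp_rw [hcoe]
        _ = ENNReal.ofReal (∫ s in Ioc (0:ℝ) t, Real.exp s / c) := by
            rw [← ofReal_integral_eq_lintegral_ofReal]
            · exact (Real.continuous_exp.div_const c).integrableOn_Ioc
            · filter_upwards with s
              positivity
        _ = 1 := by rw [hexp_int, ENNReal.ofReal_one]
    have hmem : ∀ᵐ s ∂ρ, v s ∈ X := by
      apply Measure.ae_mono' (withDensity_absolutelyContinuous _ _)
      filter_upwards [ae_restrict_mem measurableSet_Ioc] with s hs
      exact hv s hs.1.le
    have hmem_int : (∫ s, v s ∂ρ) ∈ X := hXconv.integral_mem hXcl hmem hρv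
    have hval : (∫ s, v s ∂ρ) = c⁻¹ • I := by
      rw [hρ_def, integral_withDensity_eq_integral_smul hf, hsmul_eq]
      have h2 : (fun s => (Real.exp s / c) • v s) = fun s => c⁻¹ • (Real.exp s • v s) := by
        funext s
        rw [div_eq_inv_mul, mul_smul]
      rw [h2, integral_smul, hI_def, intervalIntegral.integral_of_le ht]
    rwa [hval] at hmem_int
  -- final estimate
  obtain ⟨p, hpX, hp⟩ := hXcl.exists_infDist_eq_dist hXne (x 0)
  set θ : ℝ := Real.exp (-t) with hθ_def
  have hθ0 : 0 < θ := Real.exp_pos _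
  have hθc : θ * Real.exp t = 1 := by
    rw [hθ_def, ← Real.exp_add]
    simp
  have hθ1 : θ ≤ 1 := by
    rw [hθ_def]
    exact Real.exp_le_one_iff.2 (by linarith)
  have hxt : x t = θ • x 0 + (1 - θ) • (c⁻¹ • I) := by
    have h1 : θ • (Real.exp t • x t) = x t := by
      rw [smul_smul, hθc, one_smul]
    rw [← h1, hstar, smul_add]
    congr 1
    have hne : c ≠ 0 := ne_of_gt hc
    rw [smul_smul]
    congr 1
    rw [eq_comm, mul_inv_eq_iff_eq_mul₀ hne, hc_def]
    linear_combination -hθc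
  have hqX : θ • p + (1 - θ) • (c⁻¹ • I) ∈ X :=
    hXconv hpX hw hθ0.le (by linarith) (by ring)
  calc Metric.infDist (x t) X ≤ dist (x t) (θ • p + (1 - θ) • (c⁻¹ • I)) :=
        Metric.infDist_le_dist_of_mem hqX
    _ = θ * dist (x 0) p := by
        rw [hxt, dist_eq_norm, dist_eq_norm]
        have : θ • x 0 + (1 - θ) • (c⁻¹ • I) - (θ • p + (1 - θ) • (c⁻¹ • I)) =
            θ • (x 0 - p) := by
          rw [smul_sub]; abel
        rw [this, norm_smul, Real.norm_eq_abs, abs_of_pos hθ0]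
    _ = Metric.infDist (x 0) X * θ := by rw [hp]; ring
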